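/- Every finite-time Muller game (G, 𝓕₀, 𝓕₁, k) with threshold k ≥ 2 is determined: the winning regions W₀' and W₁' of the two players form a partition of the vertex set V. -/

import Mathlib

/- Common definitions for finite-time Muller games, following
   McNaughton / Fearnley-Zimmermann. -/

universe u

variable {V : Type u}

/-- The occurrence set of a finite word: the set of letters occurring in it. -/
def occ (x : List V) : Set V := {v | v ∈ x}

/-- `score F w` is the maximal `k` such that some suffix of `w` decomposes as
`x₁ ⋯ x_k` with every `xᵢ` non-empty and `occ xᵢ = F` (with `max ∅ = 0`). -/
noncomputable def score (F : Set V) (w : List V) : ℕ :=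
  sSup {k | ∃ xs : List (List V), xs.length = k ∧
    (∀ x ∈ xs, x ≠ [] ∧ occ x = F) ∧ xs.flatten <:+ w}

/-- `maxscore 𝓕 w` is the maximum of `score F u` over `F ∈ 𝓕` and non-empty
prefixes `u` of `w`. -/
noncomputable def maxscore (𝓕 : Set (Set V)) (w : List V) : ℕ :=
  sSup {n | ∃ F ∈ 𝓕, ∃ u : List V, u ≠ [] ∧ u <+: w ∧ n = score F u}

/-- `AccGood F w x` : `x` is a suffix of `w` with `occ x ⊆ F` such that removing
any suffix `y` of `x` from `w` does not change the score of `F`. -/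
def AccGood (F : Set V) (w x : List V) : Prop :=
  x <:+ w ∧ occ x ⊆ F ∧
    ∀ y : List V, y <:+ x → score F (w.take (w.length - y.length)) = score F w

/-- The accumulator `acc F w` : the occurrence set of the longest suffix `x` of `w`
with `occ x ⊆ F` such that the score of `F` did not change during `x`. -/
noncomputable def acc (F : Set V) (w : List V) : Set V :=
  occ (w.drop (sInf {i | AccGood F w (w.drop i)}))

/-- A non-empty word `w` is an `𝓕`-burden if `maxscore 𝓕 w ≤ 2` and for every
`F ∈ 𝓕` either `score F w = 0`, or `score F w = 1` and `acc F w = ∅`. -/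
def Burden (𝓕 : Set (Set V)) (w : List V) : Prop :=
  w ≠ [] ∧ maxscore 𝓕 w ≤ 2 ∧
    ∀ F ∈ 𝓕, score F w = 0 ∨ (score F w = 1 ∧ acc F w = ∅)

/-- The maxscore of an infinite sequence: the supremum (in `ℕ∞`) of the scores of
sets `F ∈ 𝓕` over all non-empty finite prefixes. -/
noncomputable def maxscoreInf (𝓕 : Set (Set V)) (ρ : ℕ → V) : ℕ∞ :=
  ⨆ F ∈ 𝓕, ⨆ n : ℕ, (score F ((List.range (n + 1)).map ρ) : ℕ∞)

/-- The set of elements occurring infinitely often in the sequence `ρ`. -/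
def limitSet (ρ : ℕ → V) : Set V := {v | ∀ N : ℕ, ∃ n, N ≤ n ∧ ρ n = v}

/-- The indicator of a play: the union of all `F ∈ 𝓕` with positive score
together with all non-empty accumulators of members of `𝓕`. -/
noncomputable def ind (𝓕 : Set (Set V)) (w : List V) : Set V :=
  (⋃ F ∈ {F ∈ 𝓕 | 0 < score F w}, F) ∪ ⋃ F ∈ {F ∈ 𝓕 | acc F w ≠ ∅}, acc F w

/-- An arena: a finite directed graph together with the set `V0` of vertices of
Player 0 (Player 1 owns the complement), where every vertex has a successor. -/
structure Arena (V : Type u) where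
  V0 : Set V
  E : V → V → Prop
  exists_succ : ∀ v, ∃ u, E v u

/-- The positions of Player `i`. -/
def Arena.pos (G : Arena V) (i : Fin 2) : Set V :=
  if i = 0 then G.V0 else G.V0ᶜ

/-- A strategy maps a history (the play so far, excluding the current vertex)
and the current vertex to a successor vertex. -/
abbrev Strategy (V : Type u) := List V → V → V

/-- A strategy is legal if it always moves along edges. -/
def Arena.Legal (G : Arena V) (σ : Strategy V) : Prop :=
  ∀ w v, G.E v (σ w v)

/-- An infinite play in `G` starting in `v`. -/
def Arena.IsPlay (G : Arena V) (v : V) (ρ : ℕ → V) : Prop :=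
  ρ 0 = v ∧ ∀ n, G.E (ρ n) (ρ (n + 1))

/-- An infinite play is consistent with the strategy `σ` of Player `i`. -/
def Arena.ConsistentInf (G : Arena V) (i : Fin 2) (σ : Strategy V) (ρ : ℕ → V) : Prop :=
  ∀ n, ρ n ∈ G.pos i → ρ (n + 1) = σ ((List.range n).map ρ) (ρ n)

/-- Player `i` (with winning condition `𝓕i`) wins the Muller game from `v`. -/
def Arena.MullerWinFrom (G : Arena V) (i : Fin 2) (𝓕i : Set (Set V)) (v : V) : Prop :=
  ∃ σ : Strategy V, G.Legal σ ∧
    ∀ ρ : ℕ → V, G.IsPlay v ρ → G.ConsistentInf i σ ρ → limitSet ρ ∈ 𝓕i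

/-- The winning region of Player `i` in the Muller game. -/
def Arena.MullerWinRegion (G : Arena V) (i : Fin 2) (𝓕i : Set (Set V)) : Set V :=
  {v | G.MullerWinFrom i 𝓕i v}

/-- A finite play is consistent with the strategy `σ` of Player `i`. -/
def Arena.ConsistentFin (G : Arena V) (i : Fin 2) (σ : Strategy V) (w : List V) : Prop :=
  ∀ (u : List V) (v x : V), u ++ [v, x] <+: w → v ∈ G.pos i → x = σ u v

/-- A play of the finite-time Muller game with threshold `k`: a finite path
whose maxscore (over all subsets) is exactly `k`, while the maxscore of
its proper prefixes is `< k`. -/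
def FTPlay (G : Arena V) (k : ℕ) (w : List V) : Prop :=
  w.Chain' G.E ∧ maxscore (Set.univ : Set (Set V)) w = k ∧
    maxscore (Set.univ : Set (Set V)) w.dropLast < k

/-- Player `i` wins the finite-time Muller game with threshold `k` from `v`. -/
def FTWinFrom (G : Arena V) (i : Fin 2) (𝓕i : Set (Set V)) (k : ℕ) (v : V) : Prop :=
  ∃ σ : Strategy V, G.Legal σ ∧
    ∀ w : List V, FTPlay G k w → w.head? = some v → G.ConsistentFin i σ w →
      ∃ F ∈ 𝓕i, score F w = k

/-- The winning region of Player `i` in the finite-time Muller game. -/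
def FTWinRegion (G : Arena V) (i : Fin 2) (𝓕i : Set (Set V)) (k : ℕ) : Set V :=
  {v | FTWinFrom G i 𝓕i k v}

/-- A play of McNaughton's finite-time Muller game: a finite path such that some
set `F` reaches score `|F|! + 1`, while no set did so in a proper prefix. -/
def McNPlay (G : Arena V) (w : List V) : Prop :=
  w.Chain' G.E ∧ (∃ F : Set V, score F w = F.ncard.factorial + 1) ∧
    ∀ u : List V, u <+: w → u ≠ w →
      ∀ F : Set V, score F u ≠ F.ncard.factorial + 1

/-- Player `i` wins McNaughton's finite-time Muller game from `v`. -/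
def McNWinFrom (G : Arena V) (i : Fin 2) (𝓕i : Set (Set V)) (v : V) : Prop :=
  ∃ σ : Strategy V, G.Legal σ ∧
    ∀ w : List V, McNPlay G w → w.head? = some v → G.ConsistentFin i σ w →
      ∃ F ∈ 𝓕i, score F w = F.ncard.factorial + 1

/-- The winning region of Player `i` in McNaughton's finite-time Muller game. -/
def McNWinRegion (G : Arena V) (i : Fin 2) (𝓕i : Set (Set V)) : Set V :=
  {v | McNWinFrom G i 𝓕i v}

open Classical in
/-- The list `ρ₀ ⋯ ρₙ` of the first `n+1` vertices of the unique play that starts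
in `v` and is consistent with the strategy `σ` of Player `i` and the strategy `τ`
of the other player. -/
noncomputable def playList (G : Arena V) (i : Fin 2) (σ τ : Strategy V) (v : V) :
    ℕ → List V
  | 0 => [v]
  | n + 1 =>
      let w := playList G i σ τ v n
      let u := w.getLastD v
      w ++ [if u ∈ G.pos i then σ w.dropLast u else τ w.dropLast u]

/-- `playOf G i σ τ v` : the unique play starting in `v` that is consistent with
the strategy `σ` of Player `i` and the strategy `τ` of the other player. -/
noncomputable def playOf (G : Arena V) (i : Fin 2) (σ τ : Strategy V) (v : V)
    (n : ℕ) : V :=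
  (playList G i σ τ v n).getLastD v

section aux
namespace FTM

lemma occ_append (x y : List V) : occ (x ++ y) = occ x ∪ occ y := by
  ext v; simp [occ]

lemma occ_subset_of_suffix {x y : List V} (h : x <:+ y) : occ x ⊆ occ y := by
  intro v hv; exact h.subset hv

lemma flatten_len_ge {xs : List (List V)} (h : ∀ x ∈ xs, x ≠ []) :
    xs.length ≤ xs.flatten.length := by
  induction xs with
  | nil => simp
  | cons a t ih =>
    simp only [List.flatten_cons, List.length_append, List.length_cons]
    have ha : a ≠ [] := h a (by simp)
    have : 1 ≤ a.length := by
      cases a with | nil => exact absurd rfl ha | cons _ _ => simp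
    have := ih (fun x hx => h x (by simp [hx]))
    omega

lemma occ_flatten {F : Set V} {xs : List (List V)} (hne : xs ≠ [])
    (h : ∀ x ∈ xs, x ≠ [] ∧ occ x = F) : occ xs.flatten = F := by
  induction xs with
  | nil => exact absurd rfl hne
  | cons a t ih =>
    rcases t.eq_nil_or_concat with rfl | _
    · simp only [List.flatten_cons, List.flatten_nil, List.append_nil]
      exact (h a (by simp)).2
    · have ht : t ≠ [] := by rintro rfl; simp_all
      rw [List.flatten_cons, occ_append, (h a (by simp)).2,
        ih ht (fun x hx => h x (by simp [hx]))]
      simp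

/-- membership lower bound for score -/
lemma le_score {F : Set V} {w : List V} {xs : List (List V)}
    (h : ∀ x ∈ xs, x ≠ [] ∧ occ x = F) (hs : xs.flatten <:+ w) :
    xs.length ≤ score F w := by
  apply le_csSup
  · refine ⟨w.length, ?_⟩
    rintro n ⟨ys, rfl, hy, hys⟩
    exact le_trans (flatten_len_ge (fun x hx => (hy x hx).1)) hys.length_le
  · exact ⟨xs, rfl, h, hs⟩

lemma score_le {F : Set V} {w : List V} {n : ℕ}
    (h : ∀ xs : List (List V), (∀ x ∈ xs, x ≠ [] ∧ occ x = F) → xs.flatten <:+ w →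
      xs.length ≤ n) : score F w ≤ n := by
  rcases Set.eq_empty_or_nonempty {k | ∃ xs : List (List V), xs.length = k ∧
      (∀ x ∈ xs, x ≠ [] ∧ occ x = F) ∧ xs.flatten <:+ w} with he | hne
  · simp [score, he]
  · exact csSup_le hne (by rintro n ⟨xs, rfl, hx, hxs⟩; exact h xs hx hxs)

lemma score_le_length (F : Set V) (w : List V) : score F w ≤ w.length :=
  score_le fun xs hx hs => le_trans (flatten_len_ge (fun x h => (hx x h).1)) hs.length_le

lemma score_bdd (F : Set V) (w : List V) :
    BddAbove {k | ∃ xs : List (List V), xs.length = k ∧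
      (∀ x ∈ xs, x ≠ [] ∧ occ x = F) ∧ xs.flatten <:+ w} := by
  refine ⟨w.length, ?_⟩
  rintro n ⟨ys, rfl, hy, hys⟩
  exact le_trans (flatten_len_ge (fun x hx => (hy x hx).1)) hys.length_le

lemma score_exists (F : Set V) (w : List V) :
    ∃ xs : List (List V), xs.length = score F w ∧
      (∀ x ∈ xs, x ≠ [] ∧ occ x = F) ∧ xs.flatten <:+ w := by
  have hmem := Nat.sSup_mem (s := {k | ∃ xs : List (List V), xs.length = k ∧
      (∀ x ∈ xs, x ≠ [] ∧ occ x = F) ∧ xs.flatten <:+ w})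
    ⟨0, [], rfl, by simp, by simp⟩ (score_bdd F w)
  exact hmem

lemma score_suffix_mono {F : Set V} {u w : List V} (h : u <:+ w) :
    score F u ≤ score F w := by
  obtain ⟨xs, hlen, hx, hs⟩ := score_exists F u
  exact hlen ▸ le_score hx (hs.trans h)

lemma score_zero_nil (F : Set V) : score F ([] : List V) = 0 :=
  Nat.le_zero.mp (score_le_length F [])

/-- key: appending one letter increases score by at most one -/
lemma score_append_singleton (F : Set V) (w : List V) (a : V) :
    score F (w ++ [a]) ≤ score F w + 1 := by
  apply score_le
  intro xs hx hs
  rcases xs.eq_nil_or_concat with rfl | ⟨ys, x, rfl⟩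
  · simp
  rcases ys.eq_nil_or_concat with rfl | ⟨zs, y, rfl⟩
  · simpa using Nat.succ_le_succ (Nat.zero_le _)
  have hxne : x ≠ [] := (hx x (by simp)).1
  obtain ⟨x', b, hxeq⟩ := x.eq_nil_or_concat.resolve_left hxne
  subst hxeq
  have hflat : (zs.flatten ++ y ++ x') ++ [b] <:+ w ++ [a] := by
    have := hs
    simp only [List.concat_eq_append, List.flatten_append, List.flatten_cons,
      List.flatten_nil, List.append_nil, List.append_assoc] at this ⊢
    exact this
  obtain ⟨t, ht⟩ := hflat
  have hb : b = a := by
    have := congrArg (fun l => l.getLast?) ht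
    simpa using this
  subst hb
  have ht' : zs.flatten ++ y ++ x' <:+ w := by
    refine ⟨t, List.append_cancel_right (as := t ++ (zs.flatten ++ y ++ x')) (bs := [b]) ?_⟩
    simpa [List.append_assoc] using ht
  have hnew : ∀ z ∈ zs ++ [y ++ x'], z ≠ [] ∧ occ z = F := by
    intro z hz
    rcases List.mem_append.mp hz with hz | hz
    · exact hx z (by simp [hz])
    · simp only [List.mem_singleton] at hz
      subst hz
      have hy := hx y (by simp)
      constructor
      · simp [hy.1]
      · rw [occ_append, hy.2]
        have hx'occ : occ x' ⊆ F := by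
          have h2 := (hx (x' ++ [b]) (by simp [List.concat_eq_append])).2
          rw [← h2, occ_append]; exact Set.subset_union_left
        exact Set.union_eq_self_of_subset_right hx'occ
  have hsuf : (zs ++ [y ++ x']).flatten <:+ w := by
    have : (zs ++ [y ++ x']).flatten = zs.flatten ++ y ++ x' := by
      simp [List.append_assoc]
    rw [this]; exact ht'
  have hle := le_score hnew hsuf
  simp only [List.length_append, List.length_cons, List.length_nil,
    List.concat_eq_append] at hle ⊢
  omega

/-! maxscore lemmas -/

lemma maxscore_bdd (𝓕 : Set (Set V)) (w : List V) :
    BddAbove {n | ∃ F ∈ 𝓕, ∃ u : List V, u ≠ [] ∧ u <+: w ∧ n = score F u} := by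
  refine ⟨w.length, ?_⟩
  rintro n ⟨F', _, u', _, hu', rfl⟩
  exact le_trans (score_le_length F' u') hu'.length_le

lemma le_maxscore {𝓕 : Set (Set V)} {w u : List V} {F : Set V}
    (hF : F ∈ 𝓕) (hu : u ≠ []) (hp : u <+: w) : score F u ≤ maxscore 𝓕 w :=
  le_csSup (maxscore_bdd 𝓕 w) ⟨F, hF, u, hu, hp, rfl⟩

lemma maxscore_le {𝓕 : Set (Set V)} {w : List V} {n : ℕ}
    (h : ∀ F ∈ 𝓕, ∀ u : List V, u ≠ [] → u <+: w → score F u ≤ n) :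
    maxscore 𝓕 w ≤ n := by
  rcases Set.eq_empty_or_nonempty {n | ∃ F ∈ 𝓕, ∃ u : List V, u ≠ [] ∧ u <+: w ∧
      n = score F u} with he | hne
  · simp [maxscore, he]
  · exact csSup_le hne (by rintro m ⟨F, hF, u, hu, hp, rfl⟩; exact h F hF u hu hp)

lemma maxscore_le_length (𝓕 : Set (Set V)) (w : List V) : maxscore 𝓕 w ≤ w.length :=
  maxscore_le fun F _ u _ hp => le_trans (score_le_length F u) hp.length_le

lemma maxscore_prefix_mono {𝓕 : Set (Set V)} {u w : List V} (h : u <+: w) :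
    maxscore 𝓕 u ≤ maxscore 𝓕 w :=
  maxscore_le fun F hF p hp hpp => le_maxscore hF hp (hpp.trans h)

lemma maxscore_infix_mono {𝓕 : Set (Set V)} {u w : List V} (h : u <:+: w) :
    maxscore 𝓕 u ≤ maxscore 𝓕 w := by
  obtain ⟨s, t, rfl⟩ := h
  apply maxscore_le
  intro F hF p hp hpp
  have h1 : score F p ≤ score F (s ++ p) := score_suffix_mono ⟨s, rfl⟩
  have h2 : s ++ p <+: s ++ u ++ t := by
    have : s ++ p <+: s ++ u := by
      obtain ⟨q, rfl⟩ := hpp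
      exact ⟨q, by simp [List.append_assoc]⟩
    exact this.trans ⟨t, rfl⟩
  have hne : s ++ p ≠ [] := by simp [hp]
  exact le_trans h1 (le_maxscore hF hne h2)

lemma score_le_maxscore_self {F : Set V} {𝓕 : Set (Set V)} {w : List V}
    (hF : F ∈ 𝓕) (hw : w ≠ []) : score F w ≤ maxscore 𝓕 w :=
  le_maxscore hF hw (List.prefix_refl w)

lemma maxscore_append_singleton (𝓕 : Set (Set V)) (w : List V) (a : V) :
    maxscore 𝓕 (w ++ [a]) ≤ maxscore 𝓕 w + 1 := by
  apply maxscore_le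
  intro F hF u hu hp
  rcases List.prefix_concat_iff.mp hp with h | h
  · rcases w.eq_nil_or_concat with rfl | hne
    · have := hp.length_le
      have h1 := score_le_length F u
      simp at this
      omega
    · subst h
      calc score F (w ++ [a]) ≤ score F w + 1 := score_append_singleton F w a
        _ ≤ maxscore 𝓕 w + 1 := by
            have hw : w ≠ [] := by rcases hne with ⟨l, b, rfl⟩; simp
            exact Nat.add_le_add_right (score_le_maxscore_self hF hw) 1
  · exact le_trans (le_maxscore hF hu h) (Nat.le_succ _)

lemma maxscore_nil (𝓕 : Set (Set V)) : maxscore 𝓕 ([] : List V) = 0 :=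
  Nat.le_zero.mp (maxscore_le_length 𝓕 [])

lemma exists_score_eq_of_first {w : List V} {k : ℕ} (hk : 0 < k)
    (hmax : maxscore (Set.univ : Set (Set V)) w = k)
    (hdrop : maxscore (Set.univ : Set (Set V)) w.dropLast < k) :
    ∃ F : Set V, score F w = k := by
  have hwne : w ≠ [] := by
    rintro rfl; rw [maxscore_nil] at hmax; omega
  have hmem := Nat.sSup_mem (s := {n | ∃ F ∈ (Set.univ : Set (Set V)),
      ∃ u : List V, u ≠ [] ∧ u <+: w ∧ n = score F u})
    ⟨score (Set.univ : Set V) w, (Set.univ : Set V), Set.mem_univ _, w, hwne,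
      List.prefix_refl w, rfl⟩
    (maxscore_bdd _ _)
  rw [show sSup {n | ∃ F ∈ (Set.univ : Set (Set V)),
      ∃ u : List V, u ≠ [] ∧ u <+: w ∧ n = score F u} = maxscore Set.univ w from rfl,
    hmax] at hmem
  obtain ⟨F, -, u, hune, hup, hsc⟩ := hmem
  refine ⟨F, ?_⟩
  rcases eq_or_ne u w with rfl | hne
  · exact hsc.symm
  · exfalso
    have hlt : u.length < w.length := by
      have := hup.length_le
      rcases Nat.lt_or_ge u.length w.length with h | h
      · exact h
      · exact absurd (List.prefix_iff_eq_take.mp hup ▸ by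
          rw [List.take_of_length_le h]) hne
    have : u <+: w.dropLast := by
      rw [List.dropLast_eq_take]
      exact List.prefix_take_iff.mpr ⟨hup, by omega⟩
    have := le_maxscore (Set.mem_univ F) hune this
    omega

/-! growth lemma -/

lemma blocks_or_bad {s : Finset V} {L : ℕ} (hL : 0 < L) [DecidableEq V] :
    ∀ (j : ℕ) (w : List V), (∀ a ∈ w, a ∈ s) → j * L ≤ w.length →
      (∃ u : List V, u <:+: w ∧ u.length = L ∧ ∃ a ∈ s, ∀ b ∈ u, b ∈ s.erase a) ∨
      j ≤ score (↑s : Set V) w := by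
  intro j
  induction j with
  | zero => intro w _ _; right; exact Nat.zero_le _
  | succ j ih =>
    intro w hw hlen
    set B := w.drop (w.length - L) with hB
    set w' := w.take (w.length - L) with hw'
    have hLle : L ≤ w.length := le_trans (by nlinarith) hlen
    have hBlen : B.length = L := by
      rw [hB, List.length_drop]; omega
    have hBsub : ∀ b ∈ B, b ∈ s := fun b hb => hw b (List.mem_of_mem_drop hb)
    by_cases hocc : occ B = (↑s : Set V)
    · have := ih w' (fun a ha => hw a (List.mem_of_mem_take ha)) (by
        rw [hw', List.length_take]
        have : (j + 1) * L = j * L + L := by ring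
        omega)
      rcases this with ⟨u, hu, hul, ha⟩ | hsc
      · exact Or.inl ⟨u, hu.trans (List.take_prefix _ _).isInfix, hul, ha⟩
      · right
        obtain ⟨xs, hxl, hxp, hxs⟩ := score_exists (↑s : Set V) w'
        have hBne : B ≠ [] := by
          intro h; rw [h] at hBlen; simp at hBlen; omega
        have hnew : ∀ x ∈ xs ++ [B], x ≠ [] ∧ occ x = (↑s : Set V) := by
          intro x hx
          rcases List.mem_append.mp hx with hx | hx
          · exact hxp x hx
          · simp only [List.mem_singleton] at hx; subst hx; exact ⟨hBne, hocc⟩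
        have hsuf : (xs ++ [B]).flatten <:+ w := by
          obtain ⟨p, hp⟩ := hxs
          refine ⟨p, ?_⟩
          have : w = w' ++ B := (List.take_append_drop _ w).symm
          rw [this, ← hp]
          simp [List.append_assoc]
        have := le_score hnew hsuf
        simp only [List.length_append, List.length_cons, List.length_nil] at this
        omega
    · left
      have haex : ∃ a ∈ s, a ∉ occ B := by
        by_contra h
        push_neg at h
        apply hocc
        apply Set.Subset.antisymm
        · intro b hb; exact hBsub b hb
        · intro a ha; exact h a ha
      obtain ⟨a, has, hna⟩ := haex
      refine ⟨B, (List.drop_suffix _ _).isInfix, hBlen, a, has, ?_⟩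
      intro b hb
      exact Finset.mem_erase.mpr ⟨fun h => hna (h ▸ hb), hBsub b hb⟩

lemma growth {k : ℕ} (hk : 1 ≤ k) [DecidableEq V] :
    ∀ (m : ℕ) (s : Finset V) (w : List V), s.card ≤ m → (∀ a ∈ w, a ∈ s) →
      k ^ m ≤ w.length → k ≤ maxscore (Set.univ : Set (Set V)) w := by
  intro m
  induction m with
  | zero =>
    intro s w hcard hsub hlen
    simp only [pow_zero] at hlen
    interval_cases h : s.card
    · have : s = ∅ := Finset.card_eq_zero.mp h
      subst this
      cases w with
      | nil => simp at hlen
      | cons c t => exact absurd (hsub c (by simp)) (by simp)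
  | succ m ih =>
    intro s w hcard hsub hlen
    have hL : 0 < k ^ m := Nat.pow_pos hk
    have hwne : w ≠ [] := by
      intro h; subst h
      simp only [List.length_nil] at hlen
      have : 1 ≤ k ^ (m + 1) := Nat.one_le_pow _ _ hk
      omega
    rcases blocks_or_bad hL k w hsub (by
      calc k * k ^ m = k ^ (m + 1) := by ring
        _ ≤ w.length := hlen) with ⟨u, huinf, hulen, a, has, hsub'⟩ | hsc
    · have hcard' : (s.erase a).card ≤ m := by
        have := Finset.card_erase_of_mem has
        omega
      exact le_trans (ih (s.erase a) u hcard' hsub' (by omega)) (maxscore_infix_mono huinf)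
    · exact le_trans hsc (le_maxscore (Set.mem_univ _) hwne (List.prefix_refl w))

lemma growth_univ {k : ℕ} (hk : 1 ≤ k) [Fintype V] (w : List V)
    (hlen : k ^ Fintype.card V ≤ w.length) :
    k ≤ maxscore (Set.univ : Set (Set V)) w := by
  classical
  exact growth hk (Fintype.card V) Finset.univ w (le_of_eq (Finset.card_univ))
    (fun a _ => Finset.mem_univ a) hlen

/-! uniqueness of the maximal-score set at the end of a play -/

lemma suffix_of_suffix_le {u v w : List V} (h1 : u <:+ w) (h2 : v <:+ w)
    (h : u.length ≤ v.length) : u <:+ v := by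
  rcases List.suffix_or_suffix_of_suffix h1 h2 with h' | h'
  · exact h'
  · have := h'.eq_of_length_le h
    exact this ▸ List.suffix_refl _

lemma score_unique_aux {w : List V} {k : ℕ} (hk : 2 ≤ k)
    (hdrop : maxscore (Set.univ : Set (Set V)) w.dropLast < k)
    {F F' : Set V} {xs ys : List (List V)}
    (hxl : xs.length = k) (hxb : ∀ x ∈ xs, x ≠ [] ∧ occ x = F) (hxs : xs.flatten <:+ w)
    (hyl : ys.length = k) (hyb : ∀ x ∈ ys, x ≠ [] ∧ occ x = F') (hys : ys.flatten <:+ w)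
    (hle : xs.flatten.length ≤ ys.flatten.length) : F = F' := by
  have hxsne : xs ≠ [] := by intro h; rw [h] at hxl; simp at hxl; omega
  have hysne : ys ≠ [] := by intro h; rw [h] at hyl; simp at hyl; omega
  have hoccX : occ xs.flatten = F := occ_flatten hxsne hxb
  have hoccY : occ ys.flatten = F' := occ_flatten hysne hyb
  have hXY : xs.flatten <:+ ys.flatten := suffix_of_suffix_le hxs hys hle
  have hFF' : F ⊆ F' := hoccX ▸ hoccY ▸ occ_subset_of_suffix hXY
  obtain ⟨zs, y, rfl⟩ := ys.eq_nil_or_concat.resolve_left hysne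
  simp only [List.concat_eq_append] at hyb hys hoccY hXY hyl ⊢
  have hyne : y ≠ [] := (hyb y (by simp)).1
  have hysuf : y <:+ w := by
    have h1 : y <:+ (zs ++ [y]).flatten := by
      refine ⟨zs.flatten, ?_⟩
      simp [List.flatten_append]
    exact h1.trans hys
  rcases le_or_gt y.length xs.flatten.length with hcase | hcase
  · -- y is a suffix of X, so F' ⊆ F
    have hyX : y <:+ xs.flatten := by
      refine suffix_of_suffix_le ?_ hxs hcase
      calc y <:+ (zs ++ [y]).flatten := by
            simp only [List.flatten_append, List.flatten_cons, List.flatten_nil,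
              List.append_nil]
            exact ⟨zs.flatten, rfl⟩
        _ <:+ w := hys
  
    have : F' ⊆ F := by
      have hyo : occ y = F' := (hyb y (by simp)).2
      exact hyo ▸ hoccX ▸ occ_subset_of_suffix hyX
    exact Set.Subset.antisymm hFF' this
  · -- X is a proper suffix of y: derive contradiction with hdrop
    exfalso
    have hXy : xs.flatten <:+ y := by
      refine suffix_of_suffix_le hxs hysuf (le_of_lt hcase)
    obtain ⟨z', hz'⟩ := hXy
    have hz'ne : z' ≠ [] := by
      intro h; rw [h] at hz'; simp at hz'
      rw [← hz'] at hcase; omega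
    obtain ⟨xs', xl, rfl⟩ := xs.eq_nil_or_concat.resolve_left hxsne
    simp only [List.concat_eq_append] at hxb hxs hoccX hxl hXY hz' hcase ⊢
    have hxs'ne : xs' ≠ [] := by
      intro h; rw [h] at hxl; simp at hxl; omega
    have hxlne : xl ≠ [] := (hxb xl (by simp)).1
    have hoccX' : occ xs'.flatten = F := occ_flatten hxs'ne (fun x hx => hxb x (by simp [hx]))
    -- the new last block
    set ynew := z' ++ xs'.flatten with hynew
    have hoccynew : occ ynew = F' := by
      have hyo : occ y = F' := (hyb y (by simp)).2
      have : occ y = occ z' ∪ (occ xs'.flatten ∪ occ xl) := by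
        rw [← hz']
        simp [List.flatten_append, occ_append, Set.union_assoc]
      rw [hoccX'] at this
      have hxlsub : occ xl ⊆ F := by
        rw [← hoccX]
        simp only [List.flatten_append, List.flatten_cons, List.flatten_nil,
          List.append_nil, occ_append]
        exact Set.subset_union_right
      have h4 : F ∪ occ xl = F := Set.union_eq_self_of_subset_right hxlsub
      rw [hyo, h4] at this
      rw [hynew, occ_append, hoccX']
      exact this.symm
  
    have hynewne : ynew ≠ [] := by simp [hynew, hz'ne]
    have hnewb : ∀ x ∈ zs ++ [ynew], x ≠ [] ∧ occ x = F' := by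
      intro x hx
      rcases List.mem_append.mp hx with hx | hx
      · exact hyb x (by simp [hx])
      · simp only [List.mem_singleton] at hx; subst hx
        exact ⟨hynewne, hoccynew⟩
    -- locate everything inside w
    obtain ⟨p, hp⟩ := hys
    obtain ⟨xl', c, hxleq⟩ := xl.eq_nil_or_concat.resolve_left hxlne
    simp only [List.concat_eq_append] at hxleq
    subst hxleq
    -- w = p ++ Z ++ z' ++ xs'.flatten ++ xl' ++ [c]
    have hweq : w = (p ++ zs.flatten ++ z' ++ xs'.flatten ++ xl') ++ [c] := by
      rw [← hp, ← hz']
      simp [List.flatten_append, List.append_assoc]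
    have hdl : w.dropLast = p ++ zs.flatten ++ z' ++ xs'.flatten ++ xl' := by
      rw [hweq, List.dropLast_concat]
    set u := p ++ zs.flatten ++ (z' ++ xs'.flatten) with hu
    have hupre : u <+: w.dropLast := by
      rw [hdl, hu]
      exact ⟨xl', by simp [List.append_assoc]⟩
    have hune : u ≠ [] := by simp [hu, hz'ne]
    have hsufu : (zs ++ [ynew]).flatten <:+ u := by
      rw [hu, hynew]
      refine ⟨p, ?_⟩
      simp [List.flatten_append, List.append_assoc]
    have hk' : k ≤ score F' u := by
      have h5 := le_score hnewb hsufu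
      simp only [List.length_append, List.length_cons, List.length_nil] at h5 hyl
      omega
    have := le_maxscore (Set.mem_univ F') hune hupre
    omega

lemma score_unique {w : List V} {k : ℕ} (hk : 2 ≤ k)
    (hdrop : maxscore (Set.univ : Set (Set V)) w.dropLast < k)
    {F F' : Set V} (hF : score F w = k) (hF' : score F' w = k) : F = F' := by
  obtain ⟨xs, hxl, hxb, hxs⟩ := score_exists F w
  obtain ⟨ys, hyl, hyb, hys⟩ := score_exists F' w
  rw [hF] at hxl
  rw [hF'] at hyl
  rcases le_or_gt xs.flatten.length ys.flatten.length with h | h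
  · exact score_unique_aux hk hdrop hxl hxb hxs hyl hyb hys h
  · exact (score_unique_aux hk hdrop hyl hyb hys hxl hxb hxs (le_of_lt h)).symm

end FTM
end aux

section aux2
namespace FTM
open Classical


variable (G : Arena V) (i : Fin 2) (σ τ : Strategy V) (v : V)

lemma pos_zero : G.pos 0 = G.V0 := by simp [Arena.pos]

lemma pos_one : G.pos 1 = G.V0ᶜ := by
  simp only [Arena.pos, Fin.ext_iff]
  norm_num

lemma playList_succ (n : ℕ) :
    playList G i σ τ v (n + 1) = playList G i σ τ v n ++
      [if (playList G i σ τ v n).getLastD v ∈ G.pos i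
       then σ (playList G i σ τ v n).dropLast ((playList G i σ τ v n).getLastD v)
       else τ (playList G i σ τ v n).dropLast ((playList G i σ τ v n).getLastD v)] := rfl

lemma playList_length (n : ℕ) : (playList G i σ τ v n).length = n + 1 := by
  induction n with
  | zero => rfl
  | succ n ih => rw [playList_succ, List.length_append, ih]; rfl

lemma playList_ne_nil (n : ℕ) : playList G i σ τ v n ≠ [] := by
  intro h
  have := playList_length G i σ τ v n
  rw [h] at this
  simp at this

lemma playList_cons (n : ℕ) : ∃ t, playList G i σ τ v n = v :: t := by
  induction n with
  | zero => exact ⟨[], rfl⟩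
  | succ n ih =>
    obtain ⟨t, ht⟩ := ih
    rw [playList_succ, ht]
    exact ⟨_, rfl⟩

lemma playList_head? (n : ℕ) : (playList G i σ τ v n).head? = some v := by
  obtain ⟨t, ht⟩ := playList_cons G i σ τ v n
  rw [ht]; rfl

lemma playList_dropLast (n : ℕ) :
    (playList G i σ τ v (n + 1)).dropLast = playList G i σ τ v n := by
  rw [playList_succ, List.dropLast_concat]

lemma playList_prefix_succ (n : ℕ) :
    playList G i σ τ v n <+: playList G i σ τ v (n + 1) :=
  ⟨_, (playList_succ G i σ τ v n).symm⟩

lemma playList_chain' (hσ : G.Legal σ) (hτ : G.Legal τ) (n : ℕ) :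
    (playList G i σ τ v n).Chain' G.E := by
  induction n with
  | zero => simp [playList]; exact List.isChain_singleton _
  | succ n ih =>
    rw [playList_succ, List.Chain', List.isChain_append]
    refine ⟨ih, List.isChain_singleton _, ?_⟩
    intro x hx y hy
    simp only [List.head?_cons, Option.mem_def, Option.some.injEq] at hy
    have hne := playList_ne_nil G i σ τ v n
    have hx' : x = (playList G i σ τ v n).getLastD v := by
      rw [List.getLastD_eq_getLast?]
      rw [List.getLast?_eq_getLast hne] at hx ⊢
      simp only [Option.mem_def, Option.some.injEq] at hx
      simp [hx]
    subst hx'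
    rw [← hy]
    split
    · exact hσ _ _
    · exact hτ _ _

/-- the step identity for prefixes of the constructed play -/
lemma playList_step (n : ℕ) : ∀ (u : List V) (c x : V),
    u ++ [c, x] <+: playList G i σ τ v n →
    x = if c ∈ G.pos i then σ u c else τ u c := by
  induction n with
  | zero =>
    intro u c x h
    have := h.length_le
    simp [playList] at this
  | succ n ih =>
    intro u c x h
    rw [playList_succ] at h
    rcases le_or_gt (u.length + 2) (playList G i σ τ v n).length with hle | hlt
    · have hpre : u ++ [c, x] <+: playList G i σ τ v n := by
        have h2 : u ++ [c, x] <+: (playList G i σ τ v n ++ [_]).take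
            (playList G i σ τ v n).length :=
          List.prefix_take_iff.mpr ⟨h, by simpa using hle⟩
        rwa [List.take_left] at h2
      exact ih u c x hpre
    · -- full-length case: u ++ [c, x] equals the whole list
      have hlen : (u ++ [c, x]).length = (playList G i σ τ v n ++
          [if (playList G i σ τ v n).getLastD v ∈ G.pos i
           then σ (playList G i σ τ v n).dropLast ((playList G i σ τ v n).getLastD v)
           else τ (playList G i σ τ v n).dropLast ((playList G i σ τ v n).getLastD v)]).length := by
        have h1 := h.length_le
        simp only [List.length_append, List.length_cons, List.length_nil] at h1 ⊢
        omega
      have heq := h.eq_of_length hlen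
      have heq' : (u ++ [c]) ++ [x] = playList G i σ τ v n ++
          [if (playList G i σ τ v n).getLastD v ∈ G.pos i
           then σ (playList G i σ τ v n).dropLast ((playList G i σ τ v n).getLastD v)
           else τ (playList G i σ τ v n).dropLast ((playList G i σ τ v n).getLastD v)] := by
        rw [← heq]; simp
      have hP : u ++ [c] = playList G i σ τ v n := by
        have := congrArg List.dropLast heq'
        rwa [List.dropLast_concat, List.dropLast_concat] at this
      have hx : x = if (playList G i σ τ v n).getLastD v ∈ G.pos i
           then σ (playList G i σ τ v n).dropLast ((playList G i σ τ v n).getLastD v)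
           else τ (playList G i σ τ v n).dropLast ((playList G i σ τ v n).getLastD v) := by
        have := congrArg (fun l => l.getLast?) heq'
        simpa using this
      have hc : (playList G i σ τ v n).getLastD v = c := by
        rw [← hP, List.getLastD_eq_getLast?, List.getLast?_concat]
        rfl
      have hdrop : (playList G i σ τ v n).dropLast = u := by
        rw [← hP, List.dropLast_concat]
      rw [hx, hc, hdrop]

lemma playList_consistent_i (n : ℕ) :
    G.ConsistentFin i σ (playList G i σ τ v n) := by
  intro u c x h hc
  have := playList_step G i σ τ v n u c x h
  rwa [if_pos hc] at this

lemma playList_consistent_other (n : ℕ) :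
    G.ConsistentFin 1 τ (playList G 0 σ τ v n) := by
  intro u c x h hc
  have := playList_step G 0 σ τ v n u c x h
  rw [pos_one] at hc
  rw [if_neg (by rwa [pos_zero, ← Set.mem_compl_iff])] at this
  exact this



/-! ### Disjointness of winning regions -/

lemma ftwin_disjoint [Fintype V] {G : Arena V} {F0 F1 : Set (Set V)}
    (hdisj : Disjoint F0 F1) {k : ℕ} (hk : 2 ≤ k) {v : V}
    (h0 : FTWinFrom G 0 F0 k v) (h1 : FTWinFrom G 1 F1 k v) : False := by
  obtain ⟨σ, hσleg, hσwin⟩ := h0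
  obtain ⟨τ, hτleg, hτwin⟩ := h1
  set P : ℕ → List V := playList G 0 σ τ v with hP
  set f : ℕ → ℕ := fun n => maxscore (Set.univ : Set (Set V)) (P n) with hf
  have hf0 : f 0 < k := by
    have h1 : maxscore (Set.univ : Set (Set V)) (P 0) ≤ (P 0).length :=
      maxscore_le_length _ _
    have hl : (P 0).length = 1 := playList_length G 0 σ τ v 0
    have h2 : f 0 = maxscore (Set.univ : Set (Set V)) (P 0) := rfl
    omega
  have hfN : ∃ n, k ≤ f n := by
    refine ⟨k ^ Fintype.card V, ?_⟩
    apply growth_univ (by omega)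
    rw [hP, playList_length]
    omega
  classical
  have hnpos : Nat.find hfN ≠ 0 := by
    intro h
    have := Nat.find_spec hfN
    rw [h] at this
    omega
  obtain ⟨m, hm⟩ := Nat.exists_eq_succ_of_ne_zero hnpos
  have hkn : k ≤ f (m + 1) := by
    have := Nat.find_spec hfN
    rwa [hm] at this
  have hflt : f m < k := by
    by_contra h
    have := Nat.find_min hfN (m := m) (by omega)
    omega
  have hstep : f (m + 1) ≤ f m + 1 := by
    show maxscore (Set.univ : Set (Set V)) (playList G 0 σ τ v (m + 1)) ≤
      maxscore (Set.univ : Set (Set V)) (playList G 0 σ τ v m) + 1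
    rw [playList_succ]
    exact maxscore_append_singleton _ _ _
  have hfeq : f (m + 1) = k := by omega
  have hplay : FTPlay G k (P (m + 1)) := by
    refine ⟨playList_chain' G 0 σ τ v hσleg hτleg (m + 1), hfeq, ?_⟩
    rw [hP, playList_dropLast]
    exact hflt
  obtain ⟨F, hFmem, hFs⟩ := hσwin (P (m + 1)) hplay (playList_head? G 0 σ τ v (m + 1))
    (playList_consistent_i G 0 σ τ v (m + 1))
  obtain ⟨F', hF'mem, hF's⟩ := hτwin (P (m + 1)) hplay (playList_head? G 0 σ τ v (m + 1))
    (playList_consistent_other G σ τ v (m + 1))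
  have hFF' : F = F' := by
    refine score_unique hk ?_ hFs hF's
    rw [hP, playList_dropLast]
    exact hflt
  exact Set.disjoint_left.mp hdisj hFmem (hFF' ▸ hF'mem)

/-! ### Determinacy by backward induction -/

/-- one-step outcome: if the play is over, Player 0 has won; otherwise `P` holds. -/
def GoodStep (k : ℕ) (F0 : Set (Set V)) (P : List V → Prop) (w : List V) : Prop :=
  (k ≤ maxscore (Set.univ : Set (Set V)) w → ∃ F ∈ F0, score F w = k) ∧
  (maxscore (Set.univ : Set (Set V)) w < k → P w)

/-- `P0Win G k F0 d n w` : Player 0 can force a win from history `w` within `n` steps. -/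
def P0Win (G : Arena V) (k : ℕ) (F0 : Set (Set V)) (d : V) : ℕ → List V → Prop
  | 0, _ => False
  | n + 1, w =>
    (w.getLastD d ∈ G.pos 0 →
      ∃ x, G.E (w.getLastD d) x ∧ GoodStep k F0 (P0Win G k F0 d n) (w ++ [x])) ∧
    (w.getLastD d ∉ G.pos 0 →
      ∀ x, G.E (w.getLastD d) x → GoodStep k F0 (P0Win G k F0 d n) (w ++ [x]))

/-- Player 0's strategy extracted from `P0Win`. -/
noncomputable def sigma0 (G : Arena V) (k : ℕ) (F0 : Set (Set V)) (d : V) (N : ℕ) :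
    Strategy V := fun u c =>
  if h : ∃ x, G.E c x ∧
      GoodStep k F0 (P0Win G k F0 d (N - (u.length + 1))) ((u ++ [c]) ++ [x])
  then h.choose else (G.exists_succ c).choose

/-- Player 1's strategy extracted from `¬ P0Win`. -/
noncomputable def sigma1 (G : Arena V) (k : ℕ) (F0 : Set (Set V)) (d : V) (N : ℕ) :
    Strategy V := fun u c =>
  if h : ∃ x, G.E c x ∧
      ¬ GoodStep k F0 (P0Win G k F0 d (N - (u.length + 1))) ((u ++ [c]) ++ [x])
  then h.choose else (G.exists_succ c).choose

lemma sigma0_legal (G : Arena V) (k : ℕ) (F0 : Set (Set V)) (d : V) (N : ℕ) :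
    G.Legal (sigma0 G k F0 d N) := by
  intro u c
  rw [sigma0]
  split
  · next h => exact h.choose_spec.1
  · exact (G.exists_succ c).choose_spec

lemma sigma1_legal (G : Arena V) (k : ℕ) (F0 : Set (Set V)) (d : V) (N : ℕ) :
    G.Legal (sigma1 G k F0 d N) := by
  intro u c
  rw [sigma1]
  split
  · next h => exact h.choose_spec.1
  · exact (G.exists_succ c).choose_spec



lemma getLast?_eq_getLastD {p : List V} (h : p ≠ []) (d : V) :
    p.getLast? = some (p.getLastD d) := by
  rw [List.getLastD_eq_getLast?, List.getLast?_eq_getLast h]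
  rfl

lemma eq_dropLast_concat {p : List V} (h : p ≠ []) (d : V) :
    p = p.dropLast ++ [p.getLastD d] := by
  conv_lhs => rw [← List.dropLast_append_getLast h]
  rw [List.getLastD_eq_getLast?, List.getLast?_eq_getLast h]
  rfl

lemma win0 [Fintype V] (G : Arena V) (k : ℕ) (hk : 2 ≤ k) (F0 : Set (Set V)) (d v : V)
    (hP : P0Win G k F0 d (k ^ Fintype.card V) [v]) : FTWinFrom G 0 F0 k v := by
  set N := k ^ Fintype.card V with hN
  refine ⟨sigma0 G k F0 d N, sigma0_legal G k F0 d N, ?_⟩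
  intro w hplay hhead hcons
  obtain ⟨hchain, hmax, hdrop⟩ := hplay
  have hvw : w.take 1 = [v] := by
    cases w with
    | nil => simp at hhead
    | cons a t =>
      simp only [List.head?_cons, Option.some.injEq] at hhead
      rw [hhead]
      rfl
  have main : ∀ ℓ, 1 ≤ ℓ → ℓ ≤ w.length →
      (k ≤ maxscore (Set.univ : Set (Set V)) (w.take ℓ) →
        ∃ F ∈ F0, score F (w.take ℓ) = k) ∧
      (maxscore (Set.univ : Set (Set V)) (w.take ℓ) < k →
        P0Win G k F0 d (N + 1 - ℓ) (w.take ℓ)) := by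
    intro ℓ
    induction ℓ with
    | zero => omega
    | succ ℓ ih =>
      intro h1 h2
      rcases Nat.eq_zero_or_pos ℓ with rfl | hℓ
      · rw [hvw]
        constructor
        · intro habs
          exfalso
          have := maxscore_le_length (Set.univ : Set (Set V)) [v]
          simp only [List.length_singleton] at this
          omega
        · intro _
          rw [show N + 1 - 1 = N from by omega]
          exact hP
      · have hih := ih hℓ (by omega)
        have hlt : ℓ < w.length := by omega
        have hplen : (w.take ℓ).length = ℓ := by
          rw [List.length_take]
          omega
        have hpne : w.take ℓ ≠ [] := by
          intro h
          rw [h] at hplen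
          simp at hplen
          omega
        have hproper : maxscore (Set.univ : Set (Set V)) (w.take ℓ) < k := by
          have hpre : w.take ℓ <+: w.dropLast := by
            rw [List.dropLast_eq_take]
            exact List.prefix_take_iff.mpr ⟨List.take_prefix _ _, by omega⟩
          have := maxscore_prefix_mono (𝓕 := (Set.univ : Set (Set V))) hpre
          omega
        have hp0 : P0Win G k F0 d (N + 1 - ℓ) (w.take ℓ) := hih.2 hproper
        have hℓN : ℓ < N := by
          by_contra h
          have := growth_univ (by omega : 1 ≤ k) (w.take ℓ) (by omega)
          omega
        rw [show N + 1 - ℓ = (N - ℓ) + 1 from by omega] at hp0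
        simp only [P0Win] at hp0
        have hget : w.take (ℓ + 1) = w.take ℓ ++ [w[ℓ]] := by
          rw [List.take_succ]
          simp [List.getElem?_eq_getElem hlt]
        have hpu : w.take ℓ = (w.take ℓ).dropLast ++ [(w.take ℓ).getLastD d] :=
          eq_dropLast_concat hpne d
        have hulen : (w.take ℓ).dropLast.length + 1 = ℓ := by
          rw [List.length_dropLast, hplen]
          omega
        have hfull : (w.take ℓ).dropLast ++ [(w.take ℓ).getLastD d, w[ℓ]] =
            w.take (ℓ + 1) := by
          rw [hget]
          conv_rhs => rw [hpu]
          simp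
        have hpre2 : (w.take ℓ).dropLast ++ [(w.take ℓ).getLastD d, w[ℓ]] <+: w := by
          rw [hfull]
          exact List.take_prefix _ _
        have hE : G.E ((w.take ℓ).getLastD d) w[ℓ] := by
          have hch : (w.take (ℓ + 1)).Chain' G.E := hchain.prefix (List.take_prefix _ _)
          rw [hget, List.Chain', List.isChain_append] at hch
          exact hch.2.2 _ (by rw [getLast?_eq_getLastD hpne d]; rfl) _ rfl
        have key : GoodStep k F0 (P0Win G k F0 d (N - ℓ)) (w.take ℓ ++ [w[ℓ]]) := by
          by_cases hc : (w.take ℓ).getLastD d ∈ G.pos 0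
          · obtain ⟨x', hx'E, hx'G⟩ := hp0.1 hc
            have hex' : ∃ x, G.E ((w.take ℓ).getLastD d) x ∧
                GoodStep k F0 (P0Win G k F0 d (N - ((w.take ℓ).dropLast.length + 1)))
                  (((w.take ℓ).dropLast ++ [(w.take ℓ).getLastD d]) ++ [x]) := by
              refine ⟨x', hx'E, ?_⟩
              rw [hulen, ← hpu]
              exact hx'G
            have hxeq : w[ℓ] = sigma0 G k F0 d N ((w.take ℓ).dropLast)
                ((w.take ℓ).getLastD d) := hcons _ _ _ hpre2 hc
            rw [sigma0, dif_pos hex'] at hxeq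
            have hg := hex'.choose_spec.2
            rw [← hxeq, hulen, ← hpu] at hg
            exact hg
          · have hg := hp0.2 hc w[ℓ] hE
            exact hg
        rw [hget, show N + 1 - (ℓ + 1) = N - ℓ from by omega]
        exact key
  have hwlen : 2 ≤ w.length := by
    have := maxscore_le_length (Set.univ : Set (Set V)) w
    omega
  have hfin := main w.length (by omega) (le_refl _)
  rw [List.take_length] at hfin
  exact hfin.1 (le_of_eq hmax.symm)

lemma win1 [Fintype V] (G : Arena V) (k : ℕ) (hk : 2 ≤ k) (F0 F1 : Set (Set V))
    (hpart : F0 ∪ F1 = Set.univ) (d v : V)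
    (hnP : ¬ P0Win G k F0 d (k ^ Fintype.card V) [v]) : FTWinFrom G 1 F1 k v := by
  set N := k ^ Fintype.card V with hN
  refine ⟨sigma1 G k F0 d N, sigma1_legal G k F0 d N, ?_⟩
  intro w hplay hhead hcons
  obtain ⟨hchain, hmax, hdrop⟩ := hplay
  have hvw : w.take 1 = [v] := by
    cases w with
    | nil => simp at hhead
    | cons a t =>
      simp only [List.head?_cons, Option.some.injEq] at hhead
      rw [hhead]
      rfl
  have main : ∀ ℓ, 1 ≤ ℓ → ℓ ≤ w.length →
      (k ≤ maxscore (Set.univ : Set (Set V)) (w.take ℓ) →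
        ¬ ∃ F ∈ F0, score F (w.take ℓ) = k) ∧
      (maxscore (Set.univ : Set (Set V)) (w.take ℓ) < k →
        ¬ P0Win G k F0 d (N + 1 - ℓ) (w.take ℓ)) := by
    intro ℓ
    induction ℓ with
    | zero => omega
    | succ ℓ ih =>
      intro h1 h2
      rcases Nat.eq_zero_or_pos ℓ with rfl | hℓ
      · rw [hvw]
        constructor
        · intro habs
          exfalso
          have := maxscore_le_length (Set.univ : Set (Set V)) [v]
          simp only [List.length_singleton] at this
          omega
        · intro _
          rw [show N + 1 - 1 = N from by omega]
          exact hnP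
      · have hih := ih hℓ (by omega)
        have hlt : ℓ < w.length := by omega
        have hplen : (w.take ℓ).length = ℓ := by
          rw [List.length_take]
          omega
        have hpne : w.take ℓ ≠ [] := by
          intro h
          rw [h] at hplen
          simp at hplen
          omega
        have hproper : maxscore (Set.univ : Set (Set V)) (w.take ℓ) < k := by
          have hpre : w.take ℓ <+: w.dropLast := by
            rw [List.dropLast_eq_take]
            exact List.prefix_take_iff.mpr ⟨List.take_prefix _ _, by omega⟩
          have := maxscore_prefix_mono (𝓕 := (Set.univ : Set (Set V))) hpre
          omega
        have hp0 : ¬ P0Win G k F0 d (N + 1 - ℓ) (w.take ℓ) := hih.2 hproper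
        have hℓN : ℓ < N := by
          by_contra h
          have := growth_univ (by omega : 1 ≤ k) (w.take ℓ) (by omega)
          omega
        rw [show N + 1 - ℓ = (N - ℓ) + 1 from by omega] at hp0
        simp only [P0Win] at hp0
        have hget : w.take (ℓ + 1) = w.take ℓ ++ [w[ℓ]] := by
          rw [List.take_succ]
          simp [List.getElem?_eq_getElem hlt]
        have hpu : w.take ℓ = (w.take ℓ).dropLast ++ [(w.take ℓ).getLastD d] :=
          eq_dropLast_concat hpne d
        have hulen : (w.take ℓ).dropLast.length + 1 = ℓ := by
          rw [List.length_dropLast, hplen]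
          omega
        have hfull : (w.take ℓ).dropLast ++ [(w.take ℓ).getLastD d, w[ℓ]] =
            w.take (ℓ + 1) := by
          rw [hget]
          conv_rhs => rw [hpu]
          simp
        have hpre2 : (w.take ℓ).dropLast ++ [(w.take ℓ).getLastD d, w[ℓ]] <+: w := by
          rw [hfull]
          exact List.take_prefix _ _
        have hE : G.E ((w.take ℓ).getLastD d) w[ℓ] := by
          have hch : (w.take (ℓ + 1)).Chain' G.E := hchain.prefix (List.take_prefix _ _)
          rw [hget, List.Chain', List.isChain_append] at hch
          exact hch.2.2 _ (by rw [getLast?_eq_getLastD hpne d]; rfl) _ rfl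
        have key : ¬ GoodStep k F0 (P0Win G k F0 d (N - ℓ)) (w.take ℓ ++ [w[ℓ]]) := by
          by_cases hc : (w.take ℓ).getLastD d ∈ G.pos 0
          · intro hg
            apply hp0
            refine ⟨fun _ => ⟨w[ℓ], hE, hg⟩, fun hnc => absurd hc hnc⟩
          · have hnall : ¬ ∀ x, G.E ((w.take ℓ).getLastD d) x →
                GoodStep k F0 (P0Win G k F0 d (N - ℓ)) (w.take ℓ ++ [x]) := by
              intro hall
              exact hp0 ⟨fun hcc => absurd hcc hc, fun _ => hall⟩
            push_neg at hnall
            obtain ⟨x', hx'E, hx'G⟩ := hnall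
            have hex' : ∃ x, G.E ((w.take ℓ).getLastD d) x ∧
                ¬ GoodStep k F0 (P0Win G k F0 d (N - ((w.take ℓ).dropLast.length + 1)))
                  (((w.take ℓ).dropLast ++ [(w.take ℓ).getLastD d]) ++ [x]) := by
              refine ⟨x', hx'E, ?_⟩
              rw [hulen, ← hpu]
              exact hx'G
            have hc1 : (w.take ℓ).getLastD d ∈ G.pos 1 := by
              rw [pos_one]
              rw [pos_zero] at hc
              exact hc
            have hxeq : w[ℓ] = sigma1 G k F0 d N ((w.take ℓ).dropLast)
                ((w.take ℓ).getLastD d) := hcons _ _ _ hpre2 hc1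
            rw [sigma1, dif_pos hex'] at hxeq
            have hg := hex'.choose_spec.2
            rw [← hxeq, hulen, ← hpu] at hg
            exact hg
        constructor
        · intro hge hex
          apply key
          rw [hget] at hge hex
          exact ⟨fun _ => hex, fun hlt' => by omega⟩
        · intro hlt' hp
          apply key
          rw [hget] at hlt' hp
          rw [show N + 1 - (ℓ + 1) = N - ℓ from by omega] at hp
          exact ⟨fun hge => by omega, fun _ => hp⟩
  have hwlen : 2 ≤ w.length := by
    have := maxscore_le_length (Set.univ : Set (Set V)) w
    omega
  have hfin := main w.length (by omega) (le_refl _)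
  rw [List.take_length] at hfin
  have hne := hfin.1 (le_of_eq hmax.symm)
  obtain ⟨F, hFk⟩ := exists_score_eq_of_first (by omega) hmax hdrop
  have hFmem : F ∈ F0 ∪ F1 := by
    rw [hpart]
    exact Set.mem_univ F
  rcases hFmem with hF | hF
  · exact absurd ⟨F, hF, hFk⟩ hne
  · exact ⟨F, hF, hFk⟩

end FTM
end aux2

/-- Every finite-time Muller game `(G, 𝓕₀, 𝓕₁, k)` with
threshold `k ≥ 2` is determined: the winning regions of the two players form a
partition of the vertex set. -/
theorem stmt_9 {V : Type u} [Fintype V] (G : Arena V)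
    (F0 F1 : Set (Set V)) (hpart : F0 ∪ F1 = Set.univ) (hdisj : Disjoint F0 F1)
    (k : ℕ) (hk : 2 ≤ k) :
    FTWinRegion G 0 F0 k ∪ FTWinRegion G 1 F1 k = Set.univ ∧
      Disjoint (FTWinRegion G 0 F0 k) (FTWinRegion G 1 F1 k) := by
  cases isEmpty_or_nonempty V with
  | inl h =>
    constructor
    · rw [Set.eq_empty_of_isEmpty (FTWinRegion G 0 F0 k),
        Set.eq_empty_of_isEmpty (FTWinRegion G 1 F1 k),
        Set.eq_empty_of_isEmpty (Set.univ : Set V)]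
      simp
    · rw [Set.eq_empty_of_isEmpty (FTWinRegion G 0 F0 k)]
      simp
  | inr h =>
    have d : V := Classical.arbitrary V
    constructor
    · ext v
      simp only [Set.mem_union, Set.mem_univ, iff_true]
      by_cases hcase : FTM.P0Win G k F0 d (k ^ Fintype.card V) [v]
      · exact Or.inl (FTM.win0 G k hk F0 d v hcase)
      · exact Or.inr (FTM.win1 G k hk F0 F1 hpart d v hcase)
    · rw [Set.disjoint_left]
      intro v h0 h1
      exact absurd (FTM.ftwin_disjoint hdisj hk h0 h1) not_false
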